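/- Let a, b ∈ ℝ with a < b, let ψ : [a,b] → [0,∞) be continuously differentiable, and let φ : [a,b] → ℝ be twice continuously differentiable such that exp(i·φ(a)) = i (equivalently φ(a) ∈ π/2 + 2πℤ), φ'(x) ≥ 0, φ''(x) ≥ 0 and ψ'(x) ≤ 0 for all x ∈ [a,b]. Then ∫_a^b cos(φ(x)) · ψ(x) dx ≤ 0. -/

import Mathlib

open Real

lemma cos_sub_cos_le' (x y : ℝ) : Real.cos x - Real.cos y ≤ |x - y| := by
  rw [Real.cos_sub_cos]
  calc -2 * Real.sin ((x + y) / 2) * Real.sin ((x - y) / 2)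
      ≤ |(-2 * Real.sin ((x + y) / 2) * Real.sin ((x - y) / 2))| := le_abs_self _
    _ = 2 * (|Real.sin ((x + y) / 2)| * |Real.sin ((x - y) / 2)|) := by
        rw [abs_mul, abs_mul]; simp [mul_assoc]
    _ ≤ 2 * (1 * |(x - y) / 2|) := by
        have h1 : |Real.sin ((x + y) / 2)| ≤ 1 := Real.abs_sin_le_one _
        have h2 : |Real.sin ((x - y) / 2)| ≤ |(x - y) / 2| := Real.abs_sin_le_abs
        have h3 : (0:ℝ) ≤ |Real.sin ((x - y) / 2)| := abs_nonneg _
        nlinarith [abs_nonneg ((x-y)/2)]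
    _ = |x - y| := by rw [one_mul, abs_div]; simp; ring

lemma aux_pos (a b : ℝ) (hab : a ≤ b)
    (ψ ψ' φ φ' φ'' : ℝ → ℝ)
    (hψ_nonneg : ∀ x ∈ Set.Icc a b, 0 ≤ ψ x)
    (hψ_deriv : ∀ x ∈ Set.Icc a b, HasDerivAt ψ (ψ' x) x)
    (hψ'_cont : ContinuousOn ψ' (Set.Icc a b))
    (hφ_deriv : ∀ x ∈ Set.Icc a b, HasDerivAt φ (φ' x) x)
    (hφ'_deriv : ∀ x ∈ Set.Icc a b, HasDerivAt φ' (φ'' x) x)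
    (hφ''_cont : ContinuousOn φ'' (Set.Icc a b))
    (hsin : Real.sin (φ a) = 1)
    (hφ'_pos : ∀ x ∈ Set.Icc a b, 0 < φ' x)
    (hφ''_nonneg : ∀ x ∈ Set.Icc a b, 0 ≤ φ'' x)
    (hψ'_nonpos : ∀ x ∈ Set.Icc a b, ψ' x ≤ 0) :
    ∫ x in a..b, Real.cos (φ x) * ψ x ≤ 0 := by
  have huIcc : Set.uIcc a b = Set.Icc a b := Set.uIcc_of_le hab
  set H : ℝ → ℝ := fun x => (Real.sin (φ x) - 1) * ψ x * (φ' x)⁻¹ with hHdef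
  set H' : ℝ → ℝ := fun x =>
    (Real.cos (φ x) * φ' x * ψ x + (Real.sin (φ x) - 1) * ψ' x) * (φ' x)⁻¹
      + (Real.sin (φ x) - 1) * ψ x * (-(φ'' x) / (φ' x) ^ 2) with hH'def
  -- continuity facts
  have cφ : ContinuousOn φ (Set.Icc a b) := fun x hx =>
    (hφ_deriv x hx).continuousAt.continuousWithinAt
  have cφ' : ContinuousOn φ' (Set.Icc a b) := fun x hx =>
    (hφ'_deriv x hx).continuousAt.continuousWithinAt
  have cψ : ContinuousOn ψ (Set.Icc a b) := fun x hx =>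
    (hψ_deriv x hx).continuousAt.continuousWithinAt
  have c1 : ContinuousOn (fun x => Real.cos (φ x)) (Set.Icc a b) :=
    Real.continuous_cos.comp_continuousOn cφ
  have c2 : ContinuousOn (fun x => Real.sin (φ x) - 1) (Set.Icc a b) :=
    (Real.continuous_sin.comp_continuousOn cφ).sub continuousOn_const
  have hne : ∀ x ∈ Set.Icc a b, φ' x ≠ 0 := fun x hx => (hφ'_pos x hx).ne'
  have cinv : ContinuousOn (fun x => (φ' x)⁻¹) (Set.Icc a b) := cφ'.inv₀ hne
  have cH' : ContinuousOn H' (Set.Icc a b) := by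
    apply ContinuousOn.add
    · exact (((c1.mul cφ').mul cψ).add (c2.mul hψ'_cont)).mul cinv
    · exact ((c2.mul cψ)).mul ((hφ''_cont.neg).div (cφ'.pow 2)
        (fun x hx => pow_ne_zero _ (hne x hx)))
  have hHderiv : ∀ x ∈ Set.Icc a b, HasDerivAt H (H' x) x := by
    intro x hx
    have h1 : HasDerivAt (fun y => Real.sin (φ y) - 1) (Real.cos (φ x) * φ' x) x :=
      ((Real.hasDerivAt_sin (φ x)).comp x (hφ_deriv x hx)).sub_const 1
    have h2 := h1.mul (hψ_deriv x hx)
    have h3 : HasDerivAt (fun y => (φ' y)⁻¹) (-(φ'' x) / (φ' x) ^ 2) x :=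
      (hφ'_deriv x hx).inv (hne x hx)
    exact h2.mul h3
  have hint : ∫ x in a..b, H' x = H b - H a :=
    intervalIntegral.integral_eq_sub_of_hasDerivAt
      (fun x hx => hHderiv x (huIcc ▸ hx))
      ((cH'.mono (by rw [huIcc])).intervalIntegrable)
  have hmono : (∫ x in a..b, Real.cos (φ x) * ψ x) ≤ ∫ x in a..b, H' x := by
    apply intervalIntegral.integral_mono_on hab
    · exact ((c1.mul cψ).mono (by rw [huIcc])).intervalIntegrable
    · exact ((cH'.mono (by rw [huIcc]))).intervalIntegrable
    · intro x hx
      have hp := hφ'_pos x hx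
      have hs : Real.sin (φ x) ≤ 1 := Real.sin_le_one _
      have e : H' x = Real.cos (φ x) * ψ x
          + (Real.sin (φ x) - 1) * ψ' x / φ' x
          + (1 - Real.sin (φ x)) * ψ x * φ'' x / (φ' x) ^ 2 := by
        simp only [hH'def]
        field_simp
        ring
      rw [e]
      have hA : 0 ≤ (Real.sin (φ x) - 1) * ψ' x / φ' x := by
        have := hψ'_nonpos x hx
        apply div_nonneg _ hp.le
        nlinarith
      have hB : 0 ≤ (1 - Real.sin (φ x)) * ψ x * φ'' x / (φ' x) ^ 2 :=
        div_nonneg (mul_nonneg (mul_nonneg (by linarith) (hψ_nonneg x hx))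
          (hφ''_nonneg x hx)) (sq_nonneg _)
      linarith
  have hHa : H a = 0 := by simp [hHdef, hsin]
  have hHb : H b ≤ 0 := by
    have hs : Real.sin (φ b) ≤ 1 := Real.sin_le_one _
    have hb' : b ∈ Set.Icc a b := Set.right_mem_Icc.mpr hab
    have h1 : Real.sin (φ b) - 1 ≤ 0 := by linarith
    have h2 := hψ_nonneg b hb'
    have h3 : (0:ℝ) ≤ (φ' b)⁻¹ := inv_nonneg.mpr (hφ'_pos b hb').le
    have : (Real.sin (φ b) - 1) * ψ b * (φ' b)⁻¹ ≤ 0 :=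
      mul_nonpos_of_nonpos_of_nonneg (mul_nonpos_of_nonpos_of_nonneg h1 h2) h3
    simpa [hHdef] using this
  calc (∫ x in a..b, Real.cos (φ x) * ψ x) ≤ ∫ x in a..b, H' x := hmono
    _ = H b - H a := hint
    _ ≤ 0 := by rw [hHa]; linarith

/-- Let `a < b`, let `ψ : [a,b] → [0,∞)` be continuously differentiable
(with derivative `ψ'`), and let `φ : [a,b] → ℝ` be twice continuously differentiable
(with first and second derivatives `φ'`, `φ''`) such that `exp(i·φ(a)) = i`
(equivalently `φ a ∈ π/2 + 2πℤ`), `φ' ≥ 0`, `φ'' ≥ 0` and `ψ' ≤ 0` on `[a,b]`.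
Then `∫_a^b cos(φ x) · ψ x dx ≤ 0`. -/
theorem integral_cos_mul_nonpos
    (a b : ℝ) (hab : a < b)
    (ψ ψ' φ φ' φ'' : ℝ → ℝ)
    (hψ_nonneg : ∀ x ∈ Set.Icc a b, 0 ≤ ψ x)
    (hψ_deriv : ∀ x ∈ Set.Icc a b, HasDerivAt ψ (ψ' x) x)
    (hψ'_cont : ContinuousOn ψ' (Set.Icc a b))
    (hφ_deriv : ∀ x ∈ Set.Icc a b, HasDerivAt φ (φ' x) x)
    (hφ'_deriv : ∀ x ∈ Set.Icc a b, HasDerivAt φ' (φ'' x) x)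
    (hφ''_cont : ContinuousOn φ'' (Set.Icc a b))
    (hφa : Complex.exp (Complex.I * (φ a : ℂ)) = Complex.I)
    (hφ'_nonneg : ∀ x ∈ Set.Icc a b, 0 ≤ φ' x)
    (hφ''_nonneg : ∀ x ∈ Set.Icc a b, 0 ≤ φ'' x)
    (hψ'_nonpos : ∀ x ∈ Set.Icc a b, ψ' x ≤ 0) :
    ∫ x in a..b, Real.cos (φ x) * ψ x ≤ 0 := by
  have hsin : Real.sin (φ a) = 1 := by
    rw [mul_comm, Complex.exp_mul_I] at hφa
    have := congrArg Complex.im hφa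
    simpa [Complex.sin_ofReal_re] using this
  have hable : a ≤ b := hab.le
  have huIcc : Set.uIcc a b = Set.Icc a b := Set.uIcc_of_le hable
  have cφ : ContinuousOn φ (Set.Icc a b) := fun x hx =>
    (hφ_deriv x hx).continuousAt.continuousWithinAt
  have cψ : ContinuousOn ψ (Set.Icc a b) := fun x hx =>
    (hψ_deriv x hx).continuousAt.continuousWithinAt
  -- the constant K
  set K : ℝ := (b - a) * ∫ x in a..b, ψ x with hK
  have hψint : (0:ℝ) ≤ ∫ x in a..b, ψ x :=
    intervalIntegral.integral_nonneg hable (fun x hx => hψ_nonneg x hx)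
  have hKnonneg : 0 ≤ K := mul_nonneg (by linarith) hψint
  -- for every ε > 0 the integral is at most ε * K
  have key : ∀ ε : ℝ, 0 < ε → (∫ x in a..b, Real.cos (φ x) * ψ x) ≤ ε * K := by
    intro ε hε
    set φε : ℝ → ℝ := fun x => φ x + ε * (x - a) with hφε
    set φε' : ℝ → ℝ := fun x => φ' x + ε with hφε'
    have hφε_deriv : ∀ x ∈ Set.Icc a b, HasDerivAt φε (φε' x) x := by
      intro x hx
      have h1 : HasDerivAt (fun y => ε * (y - a)) (ε * 1) x :=
        ((hasDerivAt_id x).sub_const a).const_mul ε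
      simpa [hφε, hφε', Pi.add_def] using (hφ_deriv x hx).add h1
    have hφε'_deriv : ∀ x ∈ Set.Icc a b, HasDerivAt φε' (φ'' x) x :=
      fun x hx => (hφ'_deriv x hx).add_const ε
    have hsinε : Real.sin (φε a) = 1 := by simpa [hφε] using hsin
    have hφε'_pos : ∀ x ∈ Set.Icc a b, 0 < φε' x :=
      fun x hx => add_pos_of_nonneg_of_pos (hφ'_nonneg x hx) hε
    have h1 : (∫ x in a..b, Real.cos (φε x) * ψ x) ≤ 0 :=
      aux_pos a b hable ψ ψ' φε φε' φ'' hψ_nonneg hψ_deriv hψ'_cont hφε_deriv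
        hφε'_deriv hφ''_cont hsinε hφε'_pos hφ''_nonneg hψ'_nonpos
    -- pointwise bound
    have hpt : ∀ x ∈ Set.Icc a b,
        Real.cos (φ x) * ψ x ≤ Real.cos (φε x) * ψ x + ε * (b - a) * ψ x := by
      intro x hx
      have hcos : Real.cos (φ x) - Real.cos (φε x) ≤ ε * (b - a) := by
        have := cos_sub_cos_le' (φ x) (φε x)
        have habs : |φ x - φε x| = ε * (x - a) := by
          simp only [hφε]
          rw [show φ x - (φ x + ε * (x - a)) = -(ε * (x - a)) by ring, abs_neg,
            abs_of_nonneg (mul_nonneg hε.le (by linarith [hx.1]))]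
        have hle : ε * (x - a) ≤ ε * (b - a) := by
          have := hx.2; nlinarith
        linarith [habs ▸ this]
      have hψx := hψ_nonneg x hx
      nlinarith
    have cφε : ContinuousOn φε (Set.Icc a b) := fun x hx =>
      (hφε_deriv x hx).continuousAt.continuousWithinAt
    have hmono : (∫ x in a..b, Real.cos (φ x) * ψ x)
        ≤ ∫ x in a..b, (Real.cos (φε x) * ψ x + ε * (b - a) * ψ x) := by
      apply intervalIntegral.integral_mono_on hable
      · exact ((((Real.continuous_cos.comp_continuousOn cφ).mul cψ)).mono
          (by rw [huIcc])).intervalIntegrable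
      · exact (((((Real.continuous_cos.comp_continuousOn cφε).mul cψ).add
          (continuousOn_const.mul cψ))).mono (by rw [huIcc])).intervalIntegrable
      · exact hpt
    have hsplit : (∫ x in a..b, (Real.cos (φε x) * ψ x + ε * (b - a) * ψ x))
        = (∫ x in a..b, Real.cos (φε x) * ψ x) + ε * (b - a) * ∫ x in a..b, ψ x := by
      rw [intervalIntegral.integral_add, intervalIntegral.integral_const_mul]
      · exact ((((Real.continuous_cos.comp_continuousOn cφε).mul cψ)).mono
          (by rw [huIcc])).intervalIntegrable
      · exact ((continuousOn_const.mul cψ).mono (by rw [huIcc])).intervalIntegrable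
    rw [hsplit] at hmono
    calc (∫ x in a..b, Real.cos (φ x) * ψ x)
        ≤ (∫ x in a..b, Real.cos (φε x) * ψ x) + ε * (b - a) * ∫ x in a..b, ψ x := hmono
      _ ≤ 0 + ε * (b - a) * ∫ x in a..b, ψ x := by linarith
      _ = ε * K := by rw [hK]; ring
  -- conclude
  by_contra hcon
  push_neg at hcon
  set X := ∫ x in a..b, Real.cos (φ x) * ψ x
  have hε : 0 < X / (K + 1) := div_pos hcon (by linarith)
  have := key (X / (K + 1)) hε
  have h2 : X * (K + 1) ≤ X * K := by
    have h3 : X ≤ X * K / (K + 1) := by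
      calc X ≤ X / (K + 1) * K := this
        _ = X * K / (K + 1) := by ring
    exact (le_div_iff₀ (by linarith)).mp h3
  nlinarith
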